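/- Let G be a biregular bipartite graph with parts U, V of degrees d_U, d_V and at least one edge, with singular values σ₁ ≥ σ₂. For X ⊆ U nonempty with density α = |X|/|U| and Y ⊆ V with density β = |Y|/|V|, the maximum degree of the subgraph of G induced on X ∪ Y is at least d_U · (β - (σ₂/σ₁)·√(β/α)). -/

import Mathlib

open Finset

/-- Corollary of the Expander Mixing Lemma: in a biregular bipartite graph with parts
`U`, `V` and singular values `σ₁ = √(dU·dV) ≥ σ₂`, for `X ⊆ U` nonempty of density `α` and
`Y ⊆ V` of density `β`, some vertex of `X` has at least `dU·(β - (σ₂/σ₁)·√(β/α))`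
neighbours in `Y`; in particular this bounds the maximum degree of the induced subgraph
on `X ∪ Y`. As in the paper, `σ₂` is the norm of the bipartite adjacency matrix on the
orthogonal complement of the top singular vector `1_V`. -/
theorem stmt_6 {U V : Type*} [Fintype U] [Fintype V] [Nonempty U] [Nonempty V]
    (r : U → V → Prop) [∀ u v, Decidable (r u v)] (dU dV : ℕ) (hdU : 1 ≤ dU) (hdV : 1 ≤ dV)
    (hU : ∀ u : U, (Finset.univ.filter (fun v => r u v)).card = dU)
    (hV : ∀ v : V, (Finset.univ.filter (fun u => r u v)).card = dV)
    (σ₂ : ℝ) (hσ₂nonneg : 0 ≤ σ₂)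
    (hσ₂ : ∀ x : V → ℝ, ∑ v, x v = 0 →
      ∑ u, (∑ v, (if r u v then x v else 0)) ^ 2 ≤ σ₂ ^ 2 * ∑ v, (x v) ^ 2)
    (hσ₂top : ∃ x : V → ℝ, (∑ v, x v = 0) ∧ x ≠ 0 ∧
      ∑ u, (∑ v, (if r u v then x v else 0)) ^ 2 = σ₂ ^ 2 * ∑ v, (x v) ^ 2)
    (X : Finset U) (hX : X.Nonempty) (Y : Finset V) (α β : ℝ)
    (hα : α = (X.card : ℝ) / (Fintype.card U : ℝ))
    (hβ : β = (Y.card : ℝ) / (Fintype.card V : ℝ)) :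
    ∃ x ∈ X, ((Y.filter (fun v => r x v)).card : ℝ)
      ≥ (dU : ℝ) * (β - σ₂ / Real.sqrt ((dU : ℝ) * dV) * Real.sqrt (β / α)) := by
  classical
  set m : ℝ := (Fintype.card U : ℝ) with hm_def
  set n : ℝ := (Fintype.card V : ℝ) with hn_def
  have hm : 0 < m := by positivity
  have hn : 0 < n := by positivity
  have hk : 0 < (X.card : ℝ) := by exact_mod_cast Finset.card_pos.2 hX
  have hα0 : 0 < α := by rw [hα]; positivity
  have hβ0 : 0 ≤ β := by rw [hβ]; positivity
  -- double counting
  have hmn : (Fintype.card U) * dU = (Fintype.card V) * dV := by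
    have h1 : ∑ u : U, (univ.filter (fun v => r u v)).card
        = ∑ v : V, (univ.filter (fun u => r u v)).card := by
      simp_rw [Finset.card_filter]
      exact Finset.sum_comm
    simpa [hU, hV, mul_comm] using h1
  have hmnR : m * dU = n * dV := by rw [hm_def, hn_def]; exact_mod_cast hmn
  -- the test vector
  set x : V → ℝ := fun v => (if v ∈ Y then (1:ℝ) else 0) - β with hx_def
  have hYn : (Y.card : ℝ) = β * n := by
    rw [hβ]; field_simp
  have hsum0 : ∑ v, x v = 0 := by
    simp only [hx_def, Finset.sum_sub_distrib, Finset.sum_boole, Finset.sum_const,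
      Finset.card_univ, nsmul_eq_mul]
    simp only [Finset.filter_mem_eq_inter, Finset.univ_inter]
    rw [hYn]; ring
  have hsumsq : ∑ v, (x v) ^ 2 ≤ n * β := by
    have : ∀ v : V, (x v) ^ 2 = (if v ∈ Y then (1:ℝ) else 0) - 2 * β * (if v ∈ Y then (1:ℝ) else 0) + β ^ 2 := by
      intro v; simp only [hx_def]; split_ifs <;> ring
    simp_rw [this]
    rw [Finset.sum_add_distrib, Finset.sum_sub_distrib, ← Finset.mul_sum]
    simp only [Finset.sum_boole, Finset.sum_const, Finset.card_univ, nsmul_eq_mul,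
      Finset.filter_mem_eq_inter, Finset.univ_inter]
    rw [hYn]
    nlinarith [sq_nonneg β, hn]
  -- the row sums
  set f : U → ℝ := fun u => ((Y.filter (fun v => r u v)).card : ℝ) - β * dU with hf_def
  have hf : ∀ u : U, (∑ v, (if r u v then x v else 0)) = f u := by
    intro u
    have step : ∀ v : V, (if r u v then x v else 0)
        = (if v ∈ Y.filter (fun v => r u v) then (1:ℝ) else 0) - (if r u v then β else 0) := by
      intro v
      simp only [hx_def, Finset.mem_filter]
      split_ifs with h1 h2 h3 <;> simp_all <;> ring
    simp_rw [step]
    rw [Finset.sum_sub_distrib, Finset.sum_boole]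
    have h1 : (univ.filter (fun v => v ∈ Y.filter (fun v => r u v))) = Y.filter (fun v => r u v) := by
      ext v; simp
    have h2 : (∑ v : V, if r u v then β else 0) = (dU : ℝ) * β := by
      rw [Finset.sum_ite, Finset.sum_const, Finset.sum_const]
      simp [hU u]
    rw [h1, h2, hf_def]
    ring
  -- expander mixing inequality
  have hmix : ∑ u : U, (f u) ^ 2 ≤ σ₂ ^ 2 * (n * β) := by
    calc ∑ u : U, (f u) ^ 2 = ∑ u, (∑ v, (if r u v then x v else 0)) ^ 2 := by
          simp_rw [hf]
      _ ≤ σ₂ ^ 2 * ∑ v, (x v) ^ 2 := hσ₂ x hsum0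
      _ ≤ σ₂ ^ 2 * (n * β) := by
          apply mul_le_mul_of_nonneg_left hsumsq (by positivity)
  have hmixX : ∑ u ∈ X, (f u) ^ 2 ≤ σ₂ ^ 2 * (n * β) :=
    le_trans (Finset.sum_le_sum_of_subset_of_nonneg (Finset.subset_univ X)
      (fun u _ _ => sq_nonneg _)) hmix
  have hCS : (∑ u ∈ X, f u) ^ 2 ≤ (X.card : ℝ) * ∑ u ∈ X, (f u) ^ 2 := by
    exact_mod_cast sq_sum_le_card_mul_sum_sq (s := X) (f := f)
  have hsqb : (∑ u ∈ X, f u) ^ 2 ≤ (X.card : ℝ) * (σ₂ ^ 2 * (n * β)) :=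
    hCS.trans (mul_le_mul_of_nonneg_left hmixX hk.le)
  have hlow : -(σ₂ * Real.sqrt ((X.card : ℝ) * n * β)) ≤ ∑ u ∈ X, f u := by
    have h1 : Real.sqrt ((∑ u ∈ X, f u) ^ 2) ≤ Real.sqrt ((X.card : ℝ) * (σ₂ ^ 2 * (n * β))) :=
      Real.sqrt_le_sqrt hsqb
    rw [Real.sqrt_sq_eq_abs] at h1
    have h2 : Real.sqrt ((X.card : ℝ) * (σ₂ ^ 2 * (n * β))) = σ₂ * Real.sqrt ((X.card : ℝ) * n * β) := by
      rw [show (X.card : ℝ) * (σ₂ ^ 2 * (n * β)) = σ₂ ^ 2 * ((X.card : ℝ) * n * β) by ring,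
        Real.sqrt_mul (by positivity), Real.sqrt_sq hσ₂nonneg]
    rw [h2] at h1
    have := neg_abs_le (∑ u ∈ X, f u)
    linarith
  -- the algebraic identity relating the two sqrt expressions
  have hkey : (dU : ℝ) * (σ₂ / Real.sqrt ((dU : ℝ) * dV) * Real.sqrt (β / α)) * (X.card : ℝ)
      = σ₂ * Real.sqrt ((X.card : ℝ) * n * β) := by
    have hA : (0:ℝ) < (dU : ℝ) * dV := by positivity
    rw [show (dU : ℝ) * (σ₂ / Real.sqrt ((dU : ℝ) * dV) * Real.sqrt (β / α)) * (X.card : ℝ)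
        = σ₂ * ((dU : ℝ) / Real.sqrt ((dU : ℝ) * dV) * Real.sqrt (β / α) * (X.card : ℝ)) by ring]
    congr 1
    set A : ℝ := (dU : ℝ) / Real.sqrt ((dU : ℝ) * dV) * Real.sqrt (β / α) * (X.card : ℝ) with hA_def
    have hAnn : 0 ≤ A := by rw [hA_def]; exact mul_nonneg (mul_nonneg (div_nonneg (Nat.cast_nonneg _) (Real.sqrt_nonneg _)) (Real.sqrt_nonneg _)) (Nat.cast_nonneg _)
    have hAsq : A ^ 2 = (X.card : ℝ) * n * β := by
      have h1 : (Real.sqrt ((dU : ℝ) * dV)) ^ 2 = (dU : ℝ) * dV := Real.sq_sqrt hA.le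
      have h2 : (Real.sqrt (β / α)) ^ 2 = β / α := Real.sq_sqrt (by positivity)
      have hαk : α * m = (X.card : ℝ) := by rw [hα]; exact div_mul_cancel₀ _ hm.ne'
      rw [hA_def, mul_pow, mul_pow, div_pow, h1, h2]
      have hdU0 : (0:ℝ) < dU := by exact_mod_cast hdU
      have hdV0 : (0:ℝ) < dV := by exact_mod_cast hdV
      have hdd : (dU:ℝ)^2/((dU:ℝ)*dV) = n/m := by
        rw [div_eq_div_iff (by positivity) hm.ne']
        linear_combination (dU:ℝ) * hmnR
      rw [hα, div_div_eq_mul_div, hdd]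
      rw [div_mul_div_comm, div_mul_eq_mul_div, div_eq_iff (mul_ne_zero hm.ne' hk.ne')]
      ring
    calc A = Real.sqrt (A ^ 2) := (Real.sqrt_sq hAnn).symm
      _ = Real.sqrt ((X.card : ℝ) * n * β) := by rw [hAsq]
  -- averaging
  have havg : ∑ u ∈ X, ((dU : ℝ) * (β - σ₂ / Real.sqrt ((dU : ℝ) * dV) * Real.sqrt (β / α)))
      ≤ ∑ u ∈ X, ((Y.filter (fun v => r u v)).card : ℝ) := by
    rw [Finset.sum_const, nsmul_eq_mul]
    have hdeg : ∑ u ∈ X, ((Y.filter (fun v => r u v)).card : ℝ)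
        = (∑ u ∈ X, f u) + β * dU * (X.card : ℝ) := by
      simp_rw [hf_def]
      rw [Finset.sum_sub_distrib, Finset.sum_const, nsmul_eq_mul]
      ring
    rw [hdeg]
    have := hlow
    nlinarith [hkey, hlow]
  obtain ⟨u, hu, hle⟩ := Finset.exists_le_of_sum_le hX havg
  exact ⟨u, hu, hle⟩
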